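/- Let 0 ≤ r ≤ m−1 and let A(z) = Σ_{s : wt(s̄) ≤ r} A_s z^s be a polynomial over F = GF(2^m) whose coefficients satisfy the conjugacy constraint A_{2s mod n} = A_s^2. Then there exist coefficients u_V ∈ F_2, indexed by subsets V ⊆ {0,…,m−1} with |V| ≤ r, such that for all (z_0,…,z_{m−1}) ∈ F_2^m: A(Σ_{i=0}^{m−1} z_i α^i) = Σ_{V ⊆ {0,…,m−1}, |V| ≤ r} u_V Π_{i∈V} z_i. That is, the evaluation of A on F is the evaluation of an m-variate Boolean polynomial of total degree at most r. -/

import Mathlib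

/-- Hamming weight of the `m`-bit binary expansion of `s`. -/
def wtm (m s : ℕ) : ℕ := ((Finset.range m).filter fun j => s.testBit j).card

namespace MSaux
open Finset

lemma sum_testBit_two_pow : ∀ (m s : ℕ), s < 2^m →
    (∑ j ∈ Finset.range m, if s.testBit j then 2^j else 0) = s := by
  intro m
  induction m with
  | zero => intro s hs; interval_cases s; simp
  | succ m ih =>
    intro s hs
    rw [Finset.sum_range_succ']
    have h2 : (∑ j ∈ Finset.range m, if s.testBit (j+1) then 2^(j+1) else 0)
        = 2 * ∑ j ∈ Finset.range m, if (s/2).testBit j then 2^j else 0 := by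
      rw [Finset.mul_sum]
      refine Finset.sum_congr rfl fun j _ => ?_
      rw [show j+1 = Nat.succ j from rfl, Nat.testBit_succ]
      split <;> simp [pow_succ] <;> ring
    have hp : 2^(m+1) = 2 * 2^m := by ring
    have h3 := ih (s/2) (by omega)
    have h4 : (if s.testBit 0 then 2^0 else 0) = s % 2 := by
      rw [Nat.testBit_zero]
      rcases Nat.mod_two_eq_zero_or_one s with h | h <;> simp [h]
    rw [h2, h3, h4]
    omega

lemma card_between {β : Type*} [DecidableEq β] (V R : Finset β) (h : R ⊆ V) :
    (V.powerset.filter fun W => R ⊆ W).card = 2 ^ (V \ R).card := by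
  rw [← Finset.card_powerset]
  apply Finset.card_bij' (fun W _ => W \ R) (fun U _ => U ∪ R)
  · intro W hW
    simp only [Finset.mem_filter, Finset.mem_powerset] at hW
    simp only [Finset.mem_powerset]
    exact Finset.sdiff_subset_sdiff hW.1 (le_refl _)
  · intro U hU
    simp only [Finset.mem_powerset] at hU
    simp only [Finset.mem_filter, Finset.mem_powerset]
    constructor
    · exact Finset.union_subset (hU.trans (Finset.sdiff_subset)) h
    · exact Finset.subset_union_right
  · intro W hW
    simp only [Finset.mem_filter, Finset.mem_powerset] at hW
    exact Finset.sdiff_union_of_subset hW.2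
  · intro U hU
    simp only [Finset.mem_powerset] at hU
    have hd : Disjoint U R := by
      refine Finset.disjoint_left.mpr fun x hx hxR => ?_
      exact (Finset.mem_sdiff.mp (hU hx)).2 hxR
    rw [Finset.union_sdiff_distrib, Finset.sdiff_self, Finset.union_empty,
      Finset.sdiff_eq_self_iff_disjoint.mpr hd]

lemma key_sum {F : Type*} [Field F] [CharP F 2] {β : Type*} [DecidableEq β]
    (S R : Finset β) (hR : R ⊆ S) (x : F) :
    (∑ W ∈ S.powerset, if R ⊆ W then x else 0) = if R = S then x else 0 := by
  rw [← Finset.sum_filter, Finset.sum_const, card_between S R hR, nsmul_eq_mul]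
  by_cases hRS : R = S
  · subst hRS; simp
  · rw [if_neg hRS]
    have hne : (S \ R).Nonempty := by
      obtain ⟨a, ha, hna⟩ := Finset.exists_of_ssubset (hR.ssubset_of_ne hRS)
      exact ⟨a, Finset.mem_sdiff.mpr ⟨ha, hna⟩⟩
    have hc : (S \ R).card ≠ 0 := by
      simpa [Finset.card_eq_zero, ← Finset.nonempty_iff_ne_empty] using hne.ne_empty
    have h2 : ((2:ℕ) : F) = 0 := by exact_mod_cast CharP.cast_eq_zero F 2
    rw [show ((2 ^ (S \ R).card : ℕ) : F) = ((2:ℕ):F) ^ (S \ R).card by push_cast; ring,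
      h2, zero_pow hc, zero_mul]


open Finset


lemma pow_eq_prod {F : Type*} [Field F] [CharP F 2] {m : ℕ} (W : Finset (Fin m))
    (α : F) (s : ℕ) (hs : s < 2^m) :
    (∑ i ∈ W, α ^ (i:ℕ)) ^ s
      = ∏ j ∈ (Finset.range m).filter (fun j => s.testBit j), ∑ i ∈ W, α ^ ((i:ℕ) * 2^j) := by
  haveI : ExpChar F 2 := ExpChar.prime Nat.prime_two
  have hsum : s = ∑ j ∈ (Finset.range m).filter (fun j => s.testBit j), 2^j := by
    rw [Finset.sum_filter, sum_testBit_two_pow m s hs]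
  conv_lhs => rw [hsum]
  rw [← Finset.prod_pow_eq_pow_sum]
  refine Finset.prod_congr rfl fun j _ => ?_
  rw [sum_pow_char_pow]
  exact Finset.sum_congr rfl fun i _ => by rw [← pow_mul]

lemma wtm_rot (m : ℕ) (hm : 0 < m) (s : ℕ) (hs : s < 2^m - 1) :
    wtm m (2 * s % (2^m - 1)) = wtm m s := by
  have hpow : 2^m = 2 * 2^(m-1) := by
    conv_lhs => rw [show m = (m-1)+1 by omega]
    ring
  have P : ∀ j, j < m → (2*s % (2^m - 1)).testBit ((j+1) % m) = s.testBit j := by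
    intro j hj
    by_cases h1 : s < 2^(m-1)
    · have ht : 2*s % (2^m - 1) = 2*s := Nat.mod_eq_of_lt (by omega)
      rw [ht]
      by_cases hj2 : j = m - 1
      · subst hj2
        have hjm : (m-1)+1 = m := by omega
        rw [hjm, Nat.mod_self, Nat.testBit_zero,
          Nat.testBit_eq_false_of_lt h1]
        simp [Nat.mul_mod_right]
      · have hjm : (j+1) % m = j+1 := Nat.mod_eq_of_lt (by omega)
        rw [hjm, show j+1 = Nat.succ j from rfl, Nat.testBit_succ,
          show 2*s/2 = s by omega]
    · have ht : 2*s % (2^m - 1) = 2*(s - 2^(m-1)) + 1 := by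
        rw [Nat.mod_eq_sub_mod (by omega : 2^m - 1 ≤ 2*s),
          show 2*s - (2^m - 1) = 2*(s - 2^(m-1)) + 1 by omega,
          Nat.mod_eq_of_lt (by omega)]
      rw [ht]
      by_cases hj2 : j = m - 1
      · subst hj2
        have hjm : (m-1)+1 = m := by omega
        have h5 : s / 2^(m-1) = 1 := by
          have hb : 0 < 2^(m-1) := Nat.pow_pos (by omega)
          have hlow : 1 ≤ s / 2^(m-1) := (Nat.le_div_iff_mul_le hb).mpr (by omega)
          have hhigh : s / 2^(m-1) < 2 := (Nat.div_lt_iff_lt_mul hb).mpr (by omega)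
          omega
        rw [hjm, Nat.mod_self, Nat.testBit_zero, Nat.testBit_eq_decide_div_mod_eq, h5]
        norm_num
      · have hjm : (j+1) % m = j+1 := Nat.mod_eq_of_lt (by omega)
        rw [hjm, show j+1 = Nat.succ j from rfl, Nat.testBit_succ,
          show (2*(s - 2^(m-1)) + 1)/2 = s - 2^(m-1) by omega]
        rw [Nat.testBit_eq_decide_div_mod_eq, Nat.testBit_eq_decide_div_mod_eq]
        have hsplit : 2^j * 2^(m-1-j) = 2^(m-1) := by
          rw [← pow_add]; congr 1; omega
        have h6 : s / 2^j = (s - 2^(m-1)) / 2^j + 2^(m-1-j) := by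
          conv_lhs => rw [show s = (s - 2^(m-1)) + 2^j * 2^(m-1-j) by omega]
          rw [Nat.add_mul_div_left _ _ (Nat.pow_pos (by omega))]
        rw [h6, decide_eq_decide]
        have heven : 2^(m-1-j) % 2 = 0 := by
          rw [show m-1-j = (m-2-j)+1 by omega, pow_succ]
          omega
        omega
  have hmod : ∀ a, a < m → (a+1) % m = if a+1 = m then 0 else a+1 := by
    intro a ha
    split
    · rename_i h; rw [h, Nat.mod_self]
    · exact Nat.mod_eq_of_lt (by omega)
  unfold wtm
  symm
  apply Finset.card_bij (fun j _ => (j+1) % m)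
  · intro j hj
    simp only [Finset.mem_filter, Finset.mem_range] at hj ⊢
    refine ⟨Nat.mod_lt _ (by omega), ?_⟩
    rw [P j hj.1]; exact hj.2
  · intro a ha b hb hab
    simp only [Finset.mem_filter, Finset.mem_range] at ha hb
    rw [hmod a ha.1, hmod b hb.1] at hab
    split_ifs at hab <;> omega
  · intro b hb
    simp only [Finset.mem_filter, Finset.mem_range] at hb
    refine ⟨if b = 0 then m-1 else b-1, ?_, ?_⟩
    · have ha : (if b = 0 then m-1 else b-1) < m := by split <;> omega
      have he : ((if b = 0 then m-1 else b-1)+1) % m = b := by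
        rw [hmod _ ha]
        split_ifs <;> omega
      simp only [Finset.mem_filter, Finset.mem_range]
      exact ⟨ha, by rw [← P _ ha, he]; exact hb.2⟩
    · rw [hmod _ (by split <;> omega)]
      split_ifs <;> omega

open Finset


lemma prod_linear_sum_zero {F : Type*} [Field F] [CharP F 2] {m : ℕ}
    (B : Finset ℕ) (c : ℕ → Fin m → F) (V : Finset (Fin m)) (h : B.card < V.card) :
    ∑ W ∈ V.powerset, ∏ j ∈ B, ∑ i ∈ W, c j i = 0 := by
  classical
  have step1 : ∀ W ∈ V.powerset, (∏ j ∈ B, ∑ i ∈ W, c j i)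
      = ∑ φ ∈ B.pi (fun _ => V), ∏ jx ∈ B.attach,
          (if φ jx.1 jx.2 ∈ W then c jx.1 (φ jx.1 jx.2) else 0) := by
    intro W hW
    rw [Finset.mem_powerset] at hW
    have h1 : ∀ j ∈ B, (∑ i ∈ W, c j i) = ∑ i ∈ V, (if i ∈ W then c j i else 0) := by
      intro j _
      rw [Finset.sum_ite_mem, Finset.inter_eq_right.mpr hW]
    rw [Finset.prod_congr rfl h1, Finset.prod_sum]
  rw [Finset.sum_congr rfl step1, Finset.sum_comm]
  apply Finset.sum_eq_zero
  intro φ hφ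
  set R : Finset (Fin m) := B.attach.image (fun jx => φ jx.1 jx.2) with hRdef
  have hRV : R ⊆ V := by
    intro x hx
    simp only [hRdef, Finset.mem_image] at hx
    obtain ⟨j, _, rfl⟩ := hx
    exact Finset.mem_pi.mp hφ j.1 j.2
  have hprod : ∀ W ∈ V.powerset,
      (∏ jx ∈ B.attach, if φ jx.1 jx.2 ∈ W then c jx.1 (φ jx.1 jx.2) else 0)
      = if R ⊆ W then ∏ jx ∈ B.attach, c jx.1 (φ jx.1 jx.2) else 0 := by
    intro W _
    by_cases hsub : R ⊆ W
    · rw [if_pos hsub]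
      refine Finset.prod_congr rfl fun jx _ => ?_
      rw [if_pos (hsub (Finset.mem_image_of_mem _ (Finset.mem_attach _ jx)))]
    · rw [if_neg hsub]
      obtain ⟨x, hxR, hxW⟩ := Finset.not_subset.mp hsub
      simp only [hRdef, Finset.mem_image] at hxR
      obtain ⟨jx, _, rfl⟩ := hxR
      exact Finset.prod_eq_zero (Finset.mem_attach _ jx) (if_neg hxW)
  rw [Finset.sum_congr rfl hprod, key_sum V R hRV]
  rw [if_neg]
  intro hcontra
  have h1 : R.card ≤ B.card :=
    le_trans Finset.card_image_le (by rw [Finset.card_attach])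
  rw [hcontra] at h1
  omega

lemma inversion {F : Type*} [Field F] [CharP F 2] {β : Type*} [DecidableEq β]
    (f : Finset β → F) (T : Finset β) :
    ∑ V ∈ T.powerset, ∑ W ∈ V.powerset, f W = f T := by
  have h1 : ∀ V ∈ T.powerset, (∑ W ∈ V.powerset, f W)
      = ∑ W ∈ T.powerset, if W ⊆ V then f W else 0 := by
    intro V hV
    rw [Finset.mem_powerset] at hV
    rw [show (∑ W ∈ T.powerset, if W ⊆ V then f W else 0)
        = ∑ W ∈ T.powerset, if W ∈ V.powerset then f W else 0 from
      Finset.sum_congr rfl fun W _ => by simp [Finset.mem_powerset]]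
    rw [Finset.sum_ite_mem, Finset.inter_eq_right.mpr (Finset.powerset_mono.mpr hV)]
  rw [Finset.sum_congr rfl h1, Finset.sum_comm]
  have h2 : ∀ W ∈ T.powerset, (∑ V ∈ T.powerset, if W ⊆ V then f W else 0)
      = if W = T then f W else 0 := fun W hW =>
    key_sum T W (Finset.mem_powerset.mp hW) (f W)
  rw [Finset.sum_congr rfl h2, Finset.sum_ite_eq' T.powerset T f,
    if_pos (Finset.mem_powerset.mpr (le_refl _))]


end MSaux

open MSaux

/-- Let `0 ≤ r ≤ m-1` and let `A(z) = ∑_{s : wt(s̄) ≤ r} A_s z^s` be a polynomial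
over `F = GF(2^m)` (with primitive element `α`, so that `{α^0,…,α^{m-1}}` is an
`F₂`-basis of `F`) whose coefficients satisfy the conjugacy constraint
`A_{2s mod n} = A_s²` where `n = 2^m - 1`.  Then there exist coefficients
`u_V ∈ F₂` (identified with `{0,1} ⊆ F`), indexed by subsets `V ⊆ {0,…,m-1}` with
`|V| ≤ r`, such that for all `(z_0,…,z_{m-1}) ∈ F₂^m`:
`A(∑ᵢ z_i α^i) = ∑_{V, |V| ≤ r} u_V ∏_{i∈V} z_i`; that is, the evaluation of `A`
on `F` is the evaluation of an `m`-variate Boolean polynomial of total degree at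
most `r`. -/
theorem MS_polynomial_as_boolean_polynomial (m : ℕ) (hm : 0 < m)
    {F : Type*} [Field F] [Fintype F] (hF : Fintype.card F = 2 ^ m)
    (α : F) (hα : orderOf α = 2 ^ m - 1)
    (r : ℕ) (hr : r < m)
    (A : ℕ → F)
    (hconj : ∀ s, s < 2 ^ m - 1 → wtm m s ≤ r →
      A (2 * s % (2 ^ m - 1)) = A s ^ 2) :
    ∃ u : Finset (Fin m) → F,
      (∀ V, u V = 0 ∨ u V = 1) ∧
      ∀ z : Fin m → F, (∀ i, z i = 0 ∨ z i = 1) →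
        ∑ s ∈ (Finset.range (2 ^ m - 1)).filter (fun s => wtm m s ≤ r),
            A s * (∑ i : Fin m, z i * α ^ (i : ℕ)) ^ s
          = ∑ V ∈ Finset.univ.filter (fun V : Finset (Fin m) => V.card ≤ r),
              u V * ∏ i ∈ V, z i := by
  classical
  have hpow : 2^m = 2 * 2^(m-1) := by
    conv_lhs => rw [show m = (m-1)+1 by omega]
    ring
  -- characteristic 2
  obtain ⟨k, hkp, hcard⟩ := FiniteField.card F (ringChar F)
  have hchar2 : ringChar F = 2 := by
    have hdvd : ringChar F ∣ 2^m := by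
      rw [← hF, hcard]
      exact dvd_pow_self _ (by positivity)
    exact (Nat.prime_dvd_prime_iff_eq hkp Nat.prime_two).mp (hkp.dvd_of_dvd_pow hdvd)
  have hCP : CharP F 2 := hchar2 ▸ ringChar.charP F
  haveI := hCP
  haveI : ExpChar F 2 := ExpChar.prime Nat.prime_two
  set n := 2^m - 1 with hn
  set S : Finset ℕ := (Finset.range n).filter (fun s => wtm m s ≤ r) with hS
  set f : Finset (Fin m) → F :=
    fun W => ∑ s ∈ S, A s * (∑ i ∈ W, α ^ (i:ℕ)) ^ s with hf
  set u : Finset (Fin m) → F := fun V => ∑ W ∈ V.powerset, f W with hu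
  -- degree bound : u V = 0 when r < card V
  have hdeg : ∀ V : Finset (Fin m), r < V.card → u V = 0 := by
    intro V hV
    rw [hu]
    simp only [hf]
    rw [Finset.sum_comm]
    apply Finset.sum_eq_zero
    intro s hs
    simp only [hS, Finset.mem_filter, Finset.mem_range] at hs
    rw [← Finset.mul_sum]
    have hz : ∑ W ∈ V.powerset, (∑ i ∈ W, α ^ (i:ℕ)) ^ s = 0 := by
      have hrw : ∀ W ∈ V.powerset, (∑ i ∈ W, α ^ (i:ℕ)) ^ s
          = ∏ j ∈ (Finset.range m).filter (fun j => s.testBit j),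
              ∑ i ∈ W, α ^ ((i:ℕ) * 2^j) :=
        fun W _ => pow_eq_prod W α s (by omega)
      rw [Finset.sum_congr rfl hrw]
      exact prod_linear_sum_zero _ (fun j i => α ^ ((i:ℕ) * 2^j)) V
        (lt_of_le_of_lt hs.2 hV)
    rw [hz, mul_zero]
  -- f takes values in {0,1}
  have hf2 : ∀ W, f W ^ 2 = f W := by
    intro W
    set y : F := ∑ i ∈ W, α ^ (i:ℕ) with hy
    have hyn : y ≠ 0 → y ^ n = 1 := by
      intro h
      rw [hn, ← hF]
      exact FiniteField.pow_card_sub_one_eq_one y h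
    have hyp : ∀ s, s < n → y ^ (2*s % n) = y ^ (2*s) := by
      intro s hs
      by_cases hy0 : y = 0
      · rw [hy0]
        by_cases hs0 : s = 0
        · subst hs0; simp
        · have h1 : 2*s % n ≠ 0 := by
            intro h
            obtain ⟨c, hc⟩ := Nat.dvd_of_mod_eq_zero h
            rcases Nat.lt_or_ge c 2 with hc2 | hc2
            · interval_cases c <;> omega
            · have : n * 2 ≤ n * c := Nat.mul_le_mul_left n hc2
              omega
          rw [zero_pow h1, zero_pow (by omega)]
      · conv_rhs => rw [show 2*s = n * (2*s/n) + 2*s % n from (Nat.div_add_mod _ n).symm]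
        rw [pow_add, pow_mul, hyn hy0, one_pow, one_mul]
    -- injectivity of the doubling map on range n
    have hinj : ∀ a < n, ∀ b < n, 2*a % n = 2*b % n → a = b := by
      intro a ha b hb hab
      have hda : 2*a % n = 2*a ∨ (2*a % n = 2*a - n ∧ n ≤ 2*a) := by
        rcases Nat.lt_or_ge (2*a) n with h | h
        · exact Or.inl (Nat.mod_eq_of_lt h)
        · exact Or.inr ⟨by rw [Nat.mod_eq_sub_mod h, Nat.mod_eq_of_lt (by omega)], h⟩
      have hdb : 2*b % n = 2*b ∨ (2*b % n = 2*b - n ∧ n ≤ 2*b) := by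
        rcases Nat.lt_or_ge (2*b) n with h | h
        · exact Or.inl (Nat.mod_eq_of_lt h)
        · exact Or.inr ⟨by rw [Nat.mod_eq_sub_mod h, Nat.mod_eq_of_lt (by omega)], h⟩
      rcases hda with h1 | ⟨h1, h1'⟩ <;> rcases hdb with h2 | ⟨h2, h2'⟩ <;>
        rw [h1, h2] at hab <;> omega
    have himg : S.image (fun s => 2*s % n) = S := by
      apply Finset.eq_of_subset_of_card_le
      · intro t ht
        simp only [Finset.mem_image] at ht
        obtain ⟨s, hsS, rfl⟩ := ht
        simp only [hS, Finset.mem_filter, Finset.mem_range] at hsS ⊢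
        have h0 : 0 < n := by omega
        exact ⟨Nat.mod_lt _ h0, by rw [hn, wtm_rot m hm s (hn ▸ hsS.1)]; exact hsS.2⟩
      · rw [Finset.card_image_of_injOn]
        intro a haS b hbS hab
        simp only [hS, Finset.coe_filter, Set.mem_setOf_eq, Finset.mem_range] at haS hbS
        exact hinj a haS.1 b hbS.1 hab
    have hstep : f W ^ 2 = ∑ s ∈ S, A (2*s % n) * y ^ (2*s % n) := by
      rw [hf]
      rw [sum_pow_char 2]
      refine Finset.sum_congr rfl fun s hsS => ?_
      simp only [hS, Finset.mem_filter, Finset.mem_range] at hsS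
      rw [mul_pow, ← pow_mul, hconj s (hn ▸ hsS.1) hsS.2, hyp s hsS.1, mul_comm s 2]
    rw [hstep]
    have : ∑ s ∈ S, A (2*s % n) * y ^ (2*s % n)
        = ∑ t ∈ S.image (fun s => 2*s % n), A t * y ^ t := by
      rw [Finset.sum_image]
      intro a haS b hbS hab
      simp only [Finset.mem_coe, hS, Finset.mem_filter, Finset.mem_range] at haS hbS
      exact hinj a haS.1 b hbS.1 hab
    rw [this, himg, hf]
  have hf01 : ∀ W, f W = 0 ∨ f W = 1 := by
    intro W
    have h := hf2 W
    have hfac : f W * (f W - 1) = 0 := by ring_nf; linear_combination h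
    rcases mul_eq_zero.mp hfac with h' | h'
    · exact Or.inl h'
    · exact Or.inr (by linear_combination h')
  -- u takes values in {0,1}
  have hu01 : ∀ V, u V = 0 ∨ u V = 1 := by
    intro V
    rw [hu]
    apply Finset.sum_induction f (fun x => x = 0 ∨ x = 1)
    · intro a b ha hb
      have h110 : (1:F) + 1 = 0 := by
        have : ((2:ℕ) : F) = 0 := CharP.cast_eq_zero F 2
        push_cast at this
        linear_combination this
      rcases ha with rfl | rfl <;> rcases hb with rfl | rfl <;> simp [h110]
    · exact Or.inl rfl
    · exact fun W _ => hf01 W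
  refine ⟨u, hu01, ?_⟩
  intro z hz
  set T : Finset (Fin m) := Finset.univ.filter (fun i => z i = 1) with hT
  have hzT : (∑ i : Fin m, z i * α ^ (i:ℕ)) = ∑ i ∈ T, α ^ (i:ℕ) := by
    rw [show (∑ i : Fin m, z i * α ^ (i:ℕ))
        = ∑ i ∈ Finset.univ, if i ∈ T then α ^ (i:ℕ) else 0 from
      Finset.sum_congr rfl fun i _ => by
        rcases hz i with h | h <;> simp [hT, h]]
    rw [Finset.sum_ite_mem, Finset.univ_inter]
  have hLHS : (∑ s ∈ S, A s * (∑ i : Fin m, z i * α ^ (i:ℕ)) ^ s) = f T := by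
    rw [hzT, hf]
  have hprodz : ∀ V : Finset (Fin m), (∏ i ∈ V, z i) = if V ⊆ T then 1 else 0 := by
    intro V
    by_cases hVT : V ⊆ T
    · rw [if_pos hVT]
      apply Finset.prod_eq_one
      intro i hi
      have := hVT hi
      simp only [hT, Finset.mem_filter] at this
      exact this.2
    · rw [if_neg hVT]
      obtain ⟨i, hiV, hiT⟩ := Finset.not_subset.mp hVT
      apply Finset.prod_eq_zero hiV
      rcases hz i with h | h
      · exact h
      · exact absurd (by simp [hT, h]) hiT
  calc ∑ s ∈ S, A s * (∑ i : Fin m, z i * α ^ (i:ℕ)) ^ s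
      = f T := hLHS
    _ = ∑ V ∈ T.powerset, u V := by
        rw [← inversion f T]
    _ = ∑ V ∈ T.powerset.filter (fun V => V.card ≤ r), u V := by
        rw [← Finset.sum_filter_add_sum_filter_not T.powerset (fun V => V.card ≤ r) u]
        have : ∑ V ∈ T.powerset.filter (fun V => ¬ V.card ≤ r), u V = 0 :=
          Finset.sum_eq_zero fun V hV => hdeg V (by
            simp only [Finset.mem_filter] at hV; omega)
        rw [this, add_zero]
    _ = ∑ V ∈ Finset.univ.filter (fun V : Finset (Fin m) => V.card ≤ r),
          u V * ∏ i ∈ V, z i := by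
        rw [show (∑ V ∈ Finset.univ.filter (fun V : Finset (Fin m) => V.card ≤ r),
            u V * ∏ i ∈ V, z i)
            = ∑ V ∈ Finset.univ.filter (fun V : Finset (Fin m) => V.card ≤ r),
                if V ∈ T.powerset then u V else 0 from
          Finset.sum_congr rfl fun V _ => by
            rw [hprodz V]
            by_cases hVT : V ⊆ T
            · rw [if_pos hVT, if_pos (Finset.mem_powerset.mpr hVT), mul_one]
            · rw [if_neg hVT, if_neg (fun h => hVT (Finset.mem_powerset.mp h)), mul_zero]]
        rw [Finset.sum_ite_mem]
        apply Finset.sum_congr _ fun _ _ => rfl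
        ext V
        simp [and_comm]
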